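/- Let H = ⟨g₁, …, gₙ⟩ ≤ G be a finitely generated subgroup, and suppose g₁ has maximal length among the generators, i.e. l(g₁) = max_{j=1,…,n} l(g_j). Then H is conjugate in G to a subgroup of A or of B if and only if each of the generators g₁, …, gₙ is a bounded element and each product g₁·g_j for j = 2, …, n is a bounded element. -/

import Mathlib

variable {G : Type*} [Group G]

/-- A reduced expression with respect to the factors `A` and `B`: every letter lies in
`(A ∪ B) \ (A ∩ B)` and consecutive letters lie in different factors. -/
def IsReducedWord (A B : Subgroup G) (w : List G) : Prop :=
  (∀ x ∈ w, (x ∈ A ∨ x ∈ B) ∧ ¬(x ∈ A ∧ x ∈ B)) ∧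
    w.Chain' fun x y => ¬(x ∈ A ∧ y ∈ A) ∧ ¬(x ∈ B ∧ y ∈ B)

/-- `G` is the internal amalgamated free product of its subgroups `A` and `B` over `A ⊓ B`:
`A` and `B` generate `G` and no reduced word of length at least `2` represents the identity
(this is the classical characterization of the canonical map from the abstract amalgamated
free product onto `G` being an isomorphism). -/
def IsAmalgamatedProduct (A B : Subgroup G) : Prop :=
  A ⊔ B = ⊤ ∧ ∀ w : List G, IsReducedWord A B w → 2 ≤ w.length → w.prod ≠ 1

/-- The length `l(g)` of an element: the (common) number of letters of a reduced expression
of `g`; it is `0` for elements of `A ⊓ B` (which admit no reduced expression). -/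
noncomputable def amalgLen (A B : Subgroup G) (g : G) : ℕ :=
  sInf {r | ∃ w : List G, IsReducedWord A B w ∧ w.prod = g ∧ w.length = r}

/-- A subgroup `H` is bounded if the lengths of its elements are bounded. -/
def BoundedSubgroup (A B : Subgroup G) (H : Subgroup G) : Prop :=
  ∃ N : ℕ, ∀ h ∈ H, amalgLen A B h ≤ N

/-- An element is bounded if the cyclic subgroup it generates is bounded. -/
def BoundedElement (A B : Subgroup G) (g : G) : Prop :=
  BoundedSubgroup A B (Subgroup.zpowers g)

namespace AmalgAux

set_option linter.unusedSectionVars false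

section Basic

variable {G : Type*} [Group G] (A B : Subgroup G)

/-- A letter: an element of `(A ∪ B) \ (A ∩ B)`. -/
def Ltr (x : G) : Prop := (x ∈ A ∨ x ∈ B) ∧ ¬(x ∈ A ∧ x ∈ B)

/-- Two elements lie in different factors. -/
def Opp (x y : G) : Prop := ¬(x ∈ A ∧ y ∈ A) ∧ ¬(x ∈ B ∧ y ∈ B)

/-- Same membership pattern. -/
def ST (x y : G) : Prop := (x ∈ A ↔ y ∈ A) ∧ (x ∈ B ↔ y ∈ B)

/-- formal inverse word -/
def invw (w : List G) : List G := (w.map fun x => x⁻¹).reverse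

variable {A B}

theorem red_def {w : List G} :
    IsReducedWord A B w ↔ (∀ x ∈ w, Ltr A B x) ∧ w.Chain' (Opp A B) := Iff.rfl

theorem st_refl {x : G} : ST A B x x := ⟨Iff.rfl, Iff.rfl⟩

theorem st_symm {x y : G} (h : ST A B x y) : ST A B y x := ⟨h.1.symm, h.2.symm⟩

theorem st_inv {x : G} : ST A B x x⁻¹ := ⟨(inv_mem_iff).symm, (inv_mem_iff).symm⟩

theorem ltr_st {x y : G} (hx : Ltr A B x) (h : ST A B x y) : Ltr A B y := by
  obtain ⟨h1, h2⟩ := h; unfold Ltr at *; tauto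

theorem st_trans {x y w : G} (h1 : ST A B x y) (h2 : ST A B y w) : ST A B x w :=
  ⟨h1.1.trans h2.1, h1.2.trans h2.2⟩

theorem opp_st_left {x x' y : G} (h : ST A B x x') (ho : Opp A B x y) : Opp A B x' y := by
  obtain ⟨h1, h2⟩ := h; unfold Opp at *; tauto

theorem opp_st_right {x y y' : G} (h : ST A B y y') (ho : Opp A B x y) : Opp A B x y' := by
  obtain ⟨h1, h2⟩ := h; unfold Opp at *; tauto

theorem opp_symm {x y : G} (h : Opp A B x y) : Opp A B y x := by
  unfold Opp at *; tauto

theorem mem_mul_c_iff {S : Subgroup G} {c x : G} (hc : c ∈ S) : x * c ∈ S ↔ x ∈ S :=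
  ⟨fun h => by simpa using mul_mem h (inv_mem hc), fun h => mul_mem h hc⟩

theorem mem_c_mul_iff {S : Subgroup G} {c x : G} (hc : c ∈ S) : c * x ∈ S ↔ x ∈ S :=
  ⟨fun h => by simpa using mul_mem (inv_mem hc) h, fun h => mul_mem hc h⟩

theorem st_mul_c {x c : G} (hcA : c ∈ A) (hcB : c ∈ B) : ST A B (x * c) x :=
  ⟨mem_mul_c_iff hcA, mem_mul_c_iff hcB⟩

theorem st_c_mul {x c : G} (hcA : c ∈ A) (hcB : c ∈ B) : ST A B (c * x) x :=
  ⟨mem_c_mul_iff hcA, mem_c_mul_iff hcB⟩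

theorem st_conj_c {x c : G} (hcA : c ∈ A) (hcB : c ∈ B) : ST A B (c * x * c⁻¹) x :=
  ⟨(mem_mul_c_iff (inv_mem hcA)).trans (mem_c_mul_iff hcA),
   (mem_mul_c_iff (inv_mem hcB)).trans (mem_c_mul_iff hcB)⟩

/- list helpers -/

theorem getLast?_app_singleton (l : List G) (a : G) : (l ++ [a]).getLast? = some a := by
  rw [← List.head?_reverse, List.reverse_append]
  simp

theorem invw_nil : invw ([] : List G) = [] := rfl

theorem invw_cons (x : G) (t : List G) : invw (x :: t) = invw t ++ [x⁻¹] := by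
  simp [invw]

theorem invw_append (s t : List G) : invw (s ++ t) = invw t ++ invw s := by
  simp [invw]

theorem invw_singleton (x : G) : invw [x] = [x⁻¹] := rfl

theorem invw_invw (w : List G) : invw (invw w) = w := by
  simp [invw, List.map_reverse]

theorem length_invw (w : List G) : (invw w).length = w.length := by simp [invw]

theorem prod_invw (w : List G) : (invw w).prod = w.prod⁻¹ := (List.prod_inv_reverse w).symm

theorem head?_invw (w : List G) : (invw w).head? = w.getLast?.map (·⁻¹) := by
  rcases List.eq_nil_or_concat' w with rfl | ⟨t, z, rfl⟩
  · rfl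
  · rw [invw_append, invw_singleton, getLast?_app_singleton]
    rfl

theorem getLast?_invw (w : List G) : (invw w).getLast? = w.head?.map (·⁻¹) := by
  rcases w with _ | ⟨x, t⟩
  · rfl
  · rw [invw_cons, getLast?_app_singleton]; rfl

theorem red_nil : IsReducedWord A B ([] : List G) := ⟨by simp, List.isChain_nil⟩

theorem red_singleton {x : G} (h : Ltr A B x) : IsReducedWord A B [x] :=
  ⟨fun y hy => by rw [List.mem_singleton] at hy; subst hy; exact h, List.isChain_singleton x⟩

theorem ltr_of_red_singleton {x : G} (h : IsReducedWord A B [x]) : Ltr A B x :=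
  h.1 x (by simp)

theorem red_append_iff {l₁ l₂ : List G} :
    IsReducedWord A B (l₁ ++ l₂) ↔ IsReducedWord A B l₁ ∧ IsReducedWord A B l₂ ∧
      ∀ x ∈ l₁.getLast?, ∀ y ∈ l₂.head?, Opp A B x y := by
  rw [red_def, red_def, red_def, List.Chain', List.isChain_append]
  constructor
  · rintro ⟨hl, h1, h2, h3⟩
    exact ⟨⟨fun x hx => hl x (by simp [hx]), h1⟩, ⟨fun x hx => hl x (by simp [hx]), h2⟩, h3⟩
  · rintro ⟨⟨m1, c1⟩, ⟨m2, c2⟩, h3⟩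
    refine ⟨fun x hx => ?_, c1, c2, h3⟩
    rcases List.mem_append.mp hx with h | h
    · exact m1 x h
    · exact m2 x h

theorem red_cons_iff {x : G} {t : List G} :
    IsReducedWord A B (x :: t) ↔ Ltr A B x ∧ IsReducedWord A B t ∧
      ∀ y ∈ t.head?, Opp A B x y := by
  rw [red_def, red_def, List.Chain', List.isChain_cons]
  constructor
  · rintro ⟨hl, h1, h2⟩
    exact ⟨hl x (by simp), ⟨fun y hy => hl y (by simp [hy]), h2⟩, h1⟩
  · rintro ⟨hx, ⟨hm, hc⟩, hh⟩
    refine ⟨fun y hy => ?_, hh, hc⟩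
    rcases List.mem_cons.mp hy with rfl | h
    · exact hx
    · exact hm y h

theorem red_of_red_append_left {l₁ l₂ : List G} (h : IsReducedWord A B (l₁ ++ l₂)) :
    IsReducedWord A B l₁ := (red_append_iff.mp h).1

theorem red_of_red_append_right {l₁ l₂ : List G} (h : IsReducedWord A B (l₁ ++ l₂)) :
    IsReducedWord A B l₂ := (red_append_iff.mp h).2.1

theorem red_invw {w : List G} (h : IsReducedWord A B w) : IsReducedWord A B (invw w) := by
  obtain ⟨hm, hc⟩ := h
  constructor
  · intro x hx
    simp only [invw, List.mem_reverse, List.mem_map] at hx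
    obtain ⟨y, hy, rfl⟩ := hx
    exact ltr_st (hm y hy) st_inv
  · rw [invw, List.Chain', List.isChain_reverse, List.isChain_map]
    refine hc.imp fun a b hab => ?_
    exact opp_st_left st_inv (opp_st_right st_inv (opp_symm hab))

theorem red_replaceLast {t : List G} {z z' : G} (h : IsReducedWord A B (t ++ [z]))
    (hst : ST A B z z') : IsReducedWord A B (t ++ [z']) := by
  rw [red_append_iff] at h ⊢
  obtain ⟨h1, h2, h3⟩ := h
  refine ⟨h1, red_singleton (ltr_st (ltr_of_red_singleton h2) hst), ?_⟩
  intro x hx y hy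
  simp only [List.head?_cons, Option.mem_some_iff] at hy
  subst hy
  exact opp_st_right hst (h3 x hx z (Option.mem_some_iff.mpr rfl))

theorem red_replaceHead {t : List G} {z z' : G} (h : IsReducedWord A B (z :: t))
    (hst : ST A B z z') : IsReducedWord A B (z' :: t) := by
  rw [red_cons_iff] at h ⊢
  obtain ⟨h1, h2, h3⟩ := h
  exact ⟨ltr_st h1 hst, h2, fun y hy => opp_st_left hst (h3 y hy)⟩

/-- Extending a reduced word `w ++ [d]` to the "sandwich" `w ++ [d] ++ invw w`. -/
theorem red_sandwich {w : List G} {d : G} (h : IsReducedWord A B (w ++ [d])) :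
    IsReducedWord A B (w ++ [d] ++ invw w) := by
  rw [red_append_iff]
  refine ⟨h, red_invw (red_of_red_append_left h), ?_⟩
  intro x hx y hy
  rw [getLast?_app_singleton] at hx
  simp only [Option.mem_some_iff] at hx; subst hx
  rw [head?_invw] at hy
  rcases List.eq_nil_or_concat' w with rfl | ⟨t, z, rfl⟩
  · simp at hy
  · rw [getLast?_app_singleton] at hy
    simp only [Option.map_some, Option.mem_some_iff] at hy
    subst hy
    have := (red_append_iff.mp h).2.2 z
      (by rw [getLast?_app_singleton]; exact Option.mem_some_iff.mpr rfl) d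
      (Option.mem_some_iff.mpr rfl)
    exact opp_st_right st_inv (opp_symm this)

theorem prod_sandwich (w : List G) (d : G) :
    (w ++ [d] ++ invw w).prod = w.prod * d * w.prod⁻¹ := by
  simp [prod_invw, mul_assoc]

end Basic

section Core

variable {G : Type*} [Group G] {A B : Subgroup G}

theorem prod_ne_one (hG : IsAmalgamatedProduct A B) {w : List G}
    (hw : IsReducedWord A B w) (hne : w ≠ []) : w.prod ≠ 1 := by
  match w, hne with
  | [x], _ =>
    intro h
    rw [List.prod_singleton] at h
    subst h
    exact (ltr_of_red_singleton hw).2 ⟨one_mem A, one_mem B⟩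
  | x :: y :: t, _ =>
    exact hG.2 _ hw (by simp only [List.length_cons]; omega)

theorem red_prodC_eq_nil (hG : IsAmalgamatedProduct A B) {w : List G}
    (hw : IsReducedWord A B w) (hA : w.prod ∈ A) (hB : w.prod ∈ B) : w = [] := by
  rcases List.eq_nil_or_concat' w with rfl | ⟨t, z, rfl⟩
  · rfl
  · exfalso
    have hred : IsReducedWord A B (t ++ [z * (t ++ [z]).prod⁻¹]) :=
      red_replaceLast hw (st_symm (st_mul_c (inv_mem hA) (inv_mem hB)))
    refine prod_ne_one hG hred (by simp) ?_
    simp only [List.prod_append, List.prod_singleton]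
    group

theorem amalgLen_le {w : List G} {g : G} (hw : IsReducedWord A B w) (hp : w.prod = g) :
    amalgLen A B g ≤ w.length := Nat.sInf_le ⟨w, hw, hp, rfl⟩

/-- Multiplying a reduced word by a letter on the right. -/
theorem mul_letter {u : List G} {y : G} (hu : IsReducedWord A B u) (hy : Ltr A B y) :
    (∃ w, IsReducedWord A B w ∧ w.prod = u.prod * y ∧ w.length ≤ u.length + 1) ∨
      (u.prod * y ∈ A ∧ u.prod * y ∈ B) := by
  rcases List.eq_nil_or_concat' u with rfl | ⟨t, z, rfl⟩
  · exact Or.inl ⟨[y], red_singleton hy, by simp, by simp⟩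
  · have hz : Ltr A B z := hu.1 z (by simp)
    by_cases hopp : Opp A B z y
    · refine Or.inl ⟨t ++ [z] ++ [y], ?_,
        by simp only [List.prod_append, List.prod_singleton], by simp⟩
      rw [red_append_iff]
      refine ⟨hu, red_singleton hy, ?_⟩
      intro a ha b hb
      rw [getLast?_app_singleton] at ha
      simp only [List.head?_cons, Option.mem_some_iff] at ha hb
      subst ha; subst hb
      exact hopp
    · have hsame : (z ∈ A ∧ y ∈ A) ∨ (z ∈ B ∧ y ∈ B) := by
        unfold Opp at hopp; tauto
      by_cases hpC : z * y ∈ A ∧ z * y ∈ B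
      · rcases List.eq_nil_or_concat' t with rfl | ⟨t', z', rfl⟩
        · right
          constructor
          · simpa using hpC.1
          · simpa using hpC.2
        · left
          refine ⟨t' ++ [z' * (z * y)], ?_, ?_, by simp⟩
          · exact red_replaceLast (red_of_red_append_left hu)
              (st_symm (st_mul_c hpC.1 hpC.2))
          · simp [mul_assoc]
      · left
        have hst : ST A B z (z * y) := by
          rcases hsame with ⟨h1, h2⟩ | ⟨h1, h2⟩
          · have hzB : z ∉ B := fun hb => hz.2 ⟨h1, hb⟩
            have hpB : z * y ∉ B := fun hb => hpC ⟨mul_mem h1 h2, hb⟩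
            exact ⟨iff_of_true h1 (mul_mem h1 h2), iff_of_false hzB hpB⟩
          · have hzA : z ∉ A := fun ha => hz.2 ⟨ha, h1⟩
            have hpA : z * y ∉ A := fun ha => hpC ⟨ha, mul_mem h1 h2⟩
            exact ⟨iff_of_false hzA hpA, iff_of_true h1 (mul_mem h1 h2)⟩
        refine ⟨t ++ [z * y], red_replaceLast hu hst, by simp [mul_assoc], by simp⟩

/-- Multiplying a reduced word by a central element on the right. -/
theorem mul_c_right {w : List G} {c : G} (hw : IsReducedWord A B w)
    (hcA : c ∈ A) (hcB : c ∈ B) :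
    (∃ w', IsReducedWord A B w' ∧ w'.prod = w.prod * c ∧ w'.length = w.length) ∨
      (w.prod * c ∈ A ∧ w.prod * c ∈ B) := by
  rcases List.eq_nil_or_concat' w with rfl | ⟨t, z, rfl⟩
  · right
    constructor
    · simpa using hcA
    · simpa using hcB
  · left
    exact ⟨t ++ [z * c], red_replaceLast hw (st_symm (st_mul_c hcA hcB)),
      by simp [mul_assoc], by simp⟩

theorem mul_c_left {w : List G} {c : G} (hw : IsReducedWord A B w)
    (hcA : c ∈ A) (hcB : c ∈ B) :
    (∃ w', IsReducedWord A B w' ∧ w'.prod = c * w.prod ∧ w'.length = w.length) ∨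
      (c * w.prod ∈ A ∧ c * w.prod ∈ B) := by
  rcases w with _ | ⟨x, t⟩
  · right
    constructor
    · simpa using hcA
    · simpa using hcB
  · left
    exact ⟨(c * x) :: t, red_replaceHead hw (st_symm (st_c_mul hcA hcB)),
      by simp [mul_assoc], by simp⟩

/-- Multiplying two reduced words. -/
theorem mul_red : ∀ {v u : List G}, IsReducedWord A B u → IsReducedWord A B v →
    (∃ w, IsReducedWord A B w ∧ w.prod = u.prod * v.prod ∧ w.length ≤ u.length + v.length) ∨
      (u.prod * v.prod ∈ A ∧ u.prod * v.prod ∈ B) := by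
  intro v
  induction v with
  | nil => intro u hu _; exact Or.inl ⟨u, hu, by simp, by simp⟩
  | cons y v' ih =>
    intro u hu hv
    obtain ⟨hy, hv', head⟩ := red_cons_iff.mp hv
    have hprod : (y :: v').prod = y * v'.prod := by simp
    rcases mul_letter hu hy with ⟨w₁, hw₁, hp₁, hl₁⟩ | hC
    · rcases ih hw₁ hv' with ⟨w, hw, hp, hl⟩ | hC'
      · refine Or.inl ⟨w, hw, ?_, ?_⟩
        · rw [hp, hp₁, hprod]; group
        · simp only [List.length_cons] at *; omega
      · right
        rw [hp₁] at hC'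
        rw [hprod, ← mul_assoc]
        exact hC'
    · rcases mul_c_left hv' hC.1 hC.2 with ⟨w', hw', hp', hl'⟩ | hC'
      · refine Or.inl ⟨w', hw', ?_, ?_⟩
        · rw [hp', hprod]; group
        · simp only [List.length_cons] at *; omega
      · right
        rw [hprod, ← mul_assoc]
        exact hC'

/-- Every element has a reduced expression or lies in `A ⊓ B`. -/
theorem exists_rep (hG : IsAmalgamatedProduct A B) (g : G) :
    (∃ w, IsReducedWord A B w ∧ w.prod = g) ∨ (g ∈ A ∧ g ∈ B) := by
  have hg : g ∈ Subgroup.closure ((A : Set G) ∪ (B : Set G)) := by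
    rw [Subgroup.closure_union, Subgroup.closure_eq, Subgroup.closure_eq, hG.1]
    trivial
  induction hg using Subgroup.closure_induction with
  | mem x hx =>
    by_cases hxC : x ∈ A ∧ x ∈ B
    · exact Or.inr hxC
    · have : Ltr A B x := ⟨by rcases hx with h | h; exacts [Or.inl h, Or.inr h], hxC⟩
      exact Or.inl ⟨[x], red_singleton this, by simp⟩
  | one => exact Or.inr ⟨one_mem A, one_mem B⟩
  | mul x y hx hy ihx ihy =>
    rcases ihx with ⟨wx, hwx, hpx⟩ | hxC
    · rcases ihy with ⟨wy, hwy, hpy⟩ | hyC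
      · rcases mul_red hwx hwy with ⟨w, hw, hp, _⟩ | hC
        · exact Or.inl ⟨w, hw, by rw [hp, hpx, hpy]⟩
        · rw [hpx, hpy] at hC
          exact Or.inr hC
      · rcases mul_c_right hwx hyC.1 hyC.2 with ⟨w, hw, hp, _⟩ | hC
        · exact Or.inl ⟨w, hw, by rw [hp, hpx]⟩
        · rw [hpx] at hC
          exact Or.inr hC
    · rcases ihy with ⟨wy, hwy, hpy⟩ | hyC
      · rcases mul_c_left hwy hxC.1 hxC.2 with ⟨w, hw, hp, _⟩ | hC
        · exact Or.inl ⟨w, hw, by rw [hp, hpy]⟩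
        · rw [hpy] at hC
          exact Or.inr hC
      · exact Or.inr ⟨mul_mem hxC.1 hyC.1, mul_mem hxC.2 hyC.2⟩
  | inv x hx ihx =>
    rcases ihx with ⟨w, hw, hp⟩ | hxC
    · exact Or.inl ⟨invw w, red_invw hw, by rw [prod_invw, hp]⟩
    · exact Or.inr ⟨inv_mem hxC.1, inv_mem hxC.2⟩

/-- Two reduced words whose product is inverse to each other have the same length. -/
theorem balanced (hG : IsAmalgamatedProduct A B) :
    ∀ (N : ℕ) (u v : List G), u.length + v.length ≤ N → IsReducedWord A B u →
      IsReducedWord A B v → u.prod * v.prod = 1 → u.length = v.length := by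
  intro N
  induction N with
  | zero =>
    intro u v hlen _ _ _
    omega
  | succ N ih =>
    intro u v hlen hu hv hp
    rcases List.eq_nil_or_concat' u with rfl | ⟨t, z, rfl⟩
    · rw [List.prod_nil, one_mul] at hp
      rcases List.eq_nil_or_concat' v with rfl | ⟨s, y, rfl⟩
      · rfl
      · exact absurd hp (prod_ne_one hG hv (by simp))
    · rcases v with _ | ⟨y, v'⟩
      · rw [List.prod_nil, mul_one] at hp
        exact absurd hp (prod_ne_one hG hu (by simp))
      · obtain ⟨hy, hv', hhead⟩ := red_cons_iff.mp hv
        have hz : Ltr A B z := hu.1 z (by simp)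
        by_cases hopp : Opp A B z y
        · exfalso
          have hred : IsReducedWord A B ((t ++ [z]) ++ (y :: v')) := by
            rw [red_append_iff]
            refine ⟨hu, hv, ?_⟩
            intro a ha b hb
            rw [getLast?_app_singleton] at ha
            simp only [List.head?_cons, Option.mem_some_iff] at ha hb
            subst ha; subst hb; exact hopp
          refine hG.2 _ hred (by simp; omega) ?_
          rw [List.prod_append]; exact hp
        · have hsame : (z ∈ A ∧ y ∈ A) ∨ (z ∈ B ∧ y ∈ B) := by
            unfold Opp at hopp; tauto
          have hprodeq : t.prod * (z * y) * v'.prod = 1 := by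
            rw [List.prod_append, List.prod_singleton, List.prod_cons] at hp
            rw [← hp]; group
          by_cases hpC : z * y ∈ A ∧ z * y ∈ B
          · rcases List.eq_nil_or_concat' t with rfl | ⟨t', z', rfl⟩
            · rcases v' with _ | ⟨h₁, v''⟩
              · rfl
              · exfalso
                have hred : IsReducedWord A B ((z * y * h₁) :: v'') :=
                  red_replaceHead hv' (st_symm (st_c_mul hpC.1 hpC.2))
                refine prod_ne_one hG hred (by simp) ?_
                rw [List.prod_cons]
                simpa [mul_assoc] using hprodeq
            · rcases v' with _ | ⟨h₁, v''⟩
              · exfalso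
                have hred : IsReducedWord A B (t' ++ [z' * (z * y)]) :=
                  red_replaceLast (red_of_red_append_left hu)
                    (st_symm (st_mul_c hpC.1 hpC.2))
                refine prod_ne_one hG hred (by simp) ?_
                rw [List.prod_append, List.prod_singleton]
                simpa [mul_assoc] using hprodeq
              · have h1 : IsReducedWord A B (t' ++ [z' * (z * y)]) :=
                  red_replaceLast (red_of_red_append_left hu)
                    (st_symm (st_mul_c hpC.1 hpC.2))
                have h2 : (t' ++ [z' * (z * y)]).prod * (h₁ :: v'').prod = 1 := by
                  rw [List.prod_append, List.prod_singleton]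
                  rw [List.prod_append, List.prod_singleton] at hprodeq
                  simpa [mul_assoc] using hprodeq
                have := ih (t' ++ [z' * (z * y)]) (h₁ :: v'')
                  (by simp at hlen ⊢; omega) h1 hv' h2
                simp at this ⊢
                omega
          · exfalso
            have hyltr : Ltr A B (z * y) := by
              refine ⟨?_, hpC⟩
              rcases hsame with ⟨h1, h2⟩ | ⟨h1, h2⟩
              · exact Or.inl (mul_mem h1 h2)
              · exact Or.inr (mul_mem h1 h2)
            have hstz : ST A B z (z * y) := by
              rcases hsame with ⟨h1, h2⟩ | ⟨h1, h2⟩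
              · exact ⟨iff_of_true h1 (mul_mem h1 h2),
                  iff_of_false (fun hb => hz.2 ⟨h1, hb⟩) (fun hb => hpC ⟨mul_mem h1 h2, hb⟩)⟩
              · exact ⟨iff_of_false (fun ha => hz.2 ⟨ha, h1⟩) (fun ha => hpC ⟨ha, mul_mem h1 h2⟩),
                  iff_of_true h1 (mul_mem h1 h2)⟩
            have hsty : ST A B y (z * y) := by
              rcases hsame with ⟨h1, h2⟩ | ⟨h1, h2⟩
              · exact ⟨iff_of_true h2 (mul_mem h1 h2),
                  iff_of_false (fun hb => hy.2 ⟨h2, hb⟩) (fun hb => hpC ⟨mul_mem h1 h2, hb⟩)⟩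
              · exact ⟨iff_of_false (fun ha => hy.2 ⟨ha, h2⟩) (fun ha => hpC ⟨ha, mul_mem h1 h2⟩),
                  iff_of_true h2 (mul_mem h1 h2)⟩
            have hred : IsReducedWord A B (t ++ ((z * y) :: v')) := by
              rw [red_append_iff]
              refine ⟨red_of_red_append_left hu, ?_, ?_⟩
              · rw [red_cons_iff]
                exact ⟨hyltr, hv', fun b hb => opp_st_left hsty (hhead b hb)⟩
              · intro a ha b hb
                simp only [List.head?_cons, Option.mem_some_iff] at hb
                subst hb
                have := (red_append_iff.mp hu).2.2 a ha z (Option.mem_some_iff.mpr rfl)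
                exact opp_st_right hstz this
            refine prod_ne_one hG hred (by rcases t with _ | _ <;> simp) ?_
            rw [List.prod_append, List.prod_cons]
            rw [← hprodeq]; group

/-- The length of any reduced expression computes `amalgLen`. -/
theorem amalgLen_eq (hG : IsAmalgamatedProduct A B) {w : List G}
    (hw : IsReducedWord A B w) : amalgLen A B w.prod = w.length := by
  have hmem : w.length ∈ {r | ∃ w' : List G, IsReducedWord A B w' ∧ w'.prod = w.prod ∧
      w'.length = r} := ⟨w, hw, rfl, rfl⟩
  obtain ⟨w', hw', hp', hl'⟩ := Nat.sInf_mem ⟨w.length, hmem⟩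
  have : w'.length = (invw w).length := by
    refine balanced hG (w'.length + (invw w).length) w' (invw w) le_rfl hw' (red_invw hw) ?_
    rw [prod_invw, hp', mul_inv_cancel]
  rw [amalgLen, ← hl', this, length_invw]

theorem amalgLen_central (hG : IsAmalgamatedProduct A B) {g : G}
    (hA : g ∈ A) (hB : g ∈ B) : amalgLen A B g = 0 := by
  rcases Set.eq_empty_or_nonempty {r | ∃ w : List G, IsReducedWord A B w ∧ w.prod = g ∧
      w.length = r} with he | hne
  · rw [amalgLen, he, Nat.sInf_empty]
  · obtain ⟨w, hw, hp, hl⟩ := Nat.sInf_mem hne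
    have := red_prodC_eq_nil hG hw (hp ▸ hA) (hp ▸ hB)
    subst this
    rw [amalgLen, ← hl]
    rfl

theorem amalgLen_subadd (hG : IsAmalgamatedProduct A B) (g h : G) :
    amalgLen A B (g * h) ≤ amalgLen A B g + amalgLen A B h := by
  rcases exists_rep hG g with ⟨wg, hwg, hpg⟩ | hgC
  · rcases exists_rep hG h with ⟨wh, hwh, hph⟩ | hhC
    · rcases mul_red hwg hwh with ⟨w, hw, hp, hl⟩ | hC
      · calc amalgLen A B (g * h) ≤ w.length := amalgLen_le hw (by rw [hp, hpg, hph])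
          _ ≤ wg.length + wh.length := hl
          _ = _ := by rw [← amalgLen_eq hG hwg, ← amalgLen_eq hG hwh, hpg, hph]
      · rw [hpg, hph] at hC
        rw [amalgLen_central hG hC.1 hC.2]
        exact Nat.zero_le _
    · rcases mul_c_right hwg hhC.1 hhC.2 with ⟨w, hw, hp, hl⟩ | hC
      · calc amalgLen A B (g * h) ≤ w.length := amalgLen_le hw (by rw [hp, hpg])
          _ ≤ _ := by rw [hl, ← amalgLen_eq hG hwg, hpg]; exact Nat.le_add_right _ _
      · rw [hpg] at hC
        rw [amalgLen_central hG hC.1 hC.2]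
        exact Nat.zero_le _
  · rcases exists_rep hG h with ⟨wh, hwh, hph⟩ | hhC
    · rcases mul_c_left hwh hgC.1 hgC.2 with ⟨w, hw, hp, hl⟩ | hC
      · calc amalgLen A B (g * h) ≤ w.length := amalgLen_le hw (by rw [hp, hph])
          _ ≤ _ := by rw [hl, ← amalgLen_eq hG hwh, hph]; exact Nat.le_add_left _ _
      · rw [hph] at hC
        rw [amalgLen_central hG hC.1 hC.2]
        exact Nat.zero_le _
    · rw [amalgLen_central hG (mul_mem hgC.1 hhC.1) (mul_mem hgC.2 hhC.2)]
      exact Nat.zero_le _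

end Core

section Bounded

variable {G : Type*} [Group G] {A B : Subgroup G}

theorem pow_mem_zpowers' (g : G) (n : ℕ) : g ^ n ∈ Subgroup.zpowers g :=
  ⟨(n : ℤ), by show g ^ (n : ℤ) = g ^ n; rw [zpow_natCast]⟩

/-- The product of a cyclically reduced word of length at least 2 is not bounded. -/
theorem unbounded_cyc (hG : IsAmalgamatedProduct A B) {x y : G} {t : List G}
    (hred : IsReducedWord A B ((x :: t) ++ [y])) (hcyc : Opp A B y x) :
    ¬ BoundedElement A B ((x :: t) ++ [y]).prod := by
  set W : List G := (x :: t) ++ [y] with hW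
  rintro ⟨N, hN⟩
  have key : ∀ n : ℕ, ∃ s : List G, IsReducedWord A B ((x :: s) ++ [y]) ∧
      ((x :: s) ++ [y]).prod = W.prod ^ (n + 1) ∧
      ((x :: s) ++ [y]).length = (n + 1) * W.length := by
    intro n
    induction n with
    | zero => exact ⟨t, hred, by simp [hW], by simp [hW]⟩
    | succ n ih =>
      obtain ⟨s, h1, h2, h3⟩ := ih
      refine ⟨t ++ [y] ++ (x :: s), ?_, ?_, ?_⟩
      · have heq : (x :: (t ++ [y] ++ (x :: s))) ++ [y] = W ++ ((x :: s) ++ [y]) := by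
          simp [hW]
        rw [heq, red_append_iff]
        refine ⟨hred, h1, ?_⟩
        intro a ha b hb
        rw [hW, getLast?_app_singleton] at ha
        simp only [List.cons_append, List.head?_cons, Option.mem_some_iff] at ha hb
        subst ha; subst hb; exact hcyc
      · have heq : (x :: (t ++ [y] ++ (x :: s))) ++ [y] = W ++ ((x :: s) ++ [y]) := by
          simp [hW]
        rw [heq, List.prod_append, h2, ← pow_succ']
      · have heq : (x :: (t ++ [y] ++ (x :: s))) ++ [y] = W ++ ((x :: s) ++ [y]) := by
          simp [hW]
        rw [heq, List.length_append, h3]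
        ring
  obtain ⟨s, h1, h2, h3⟩ := key N
  have hlen : amalgLen A B (W.prod ^ (N + 1)) = (N + 1) * W.length := by
    rw [← h2, amalgLen_eq hG h1, h3]
  have hb := hN (W.prod ^ (N + 1)) (pow_mem_zpowers' _ _)
  rw [hlen] at hb
  have : 2 ≤ W.length := by rw [hW]; simp only [List.length_append, List.length_cons]; omega
  nlinarith

theorem bounded_conj (hG : IsAmalgamatedProduct A B) (x : G) {g : G}
    (h : BoundedElement A B g) : BoundedElement A B (x⁻¹ * g * x) := by
  obtain ⟨N, hN⟩ := h
  refine ⟨amalgLen A B x⁻¹ + N + amalgLen A B x, ?_⟩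
  rintro h' ⟨k, hk⟩
  have heq : (x⁻¹ * g * x) ^ k = x⁻¹ * g ^ k * x := by
    have := conj_zpow (i := k) (a := x⁻¹) (b := g)
    rwa [inv_inv] at this
  have hk' : (x⁻¹ * g * x) ^ k = h' := hk
  rw [← hk', heq]
  calc amalgLen A B (x⁻¹ * g ^ k * x) ≤ amalgLen A B (x⁻¹ * g ^ k) + amalgLen A B x :=
        amalgLen_subadd hG _ _
    _ ≤ amalgLen A B x⁻¹ + amalgLen A B (g ^ k) + amalgLen A B x := by
        have := amalgLen_subadd hG x⁻¹ (g ^ k); omega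
    _ ≤ amalgLen A B x⁻¹ + N + amalgLen A B x := by
        have := hN (g ^ k) ⟨k, rfl⟩; omega

theorem bounded_of_conj (hG : IsAmalgamatedProduct A B) (x : G) {g : G}
    (h : BoundedElement A B (x⁻¹ * g * x)) : BoundedElement A B g := by
  have := bounded_conj hG x⁻¹ h
  simpa [mul_assoc] using this

theorem bounded_sq {g : G} (h : BoundedElement A B g) : BoundedElement A B (g * g) := by
  obtain ⟨N, hN⟩ := h
  refine ⟨N, fun y hy => hN y ?_⟩
  have : Subgroup.zpowers (g * g) ≤ Subgroup.zpowers g := by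
    rw [Subgroup.zpowers_le]
    exact ⟨(2 : ℤ), by
      show g ^ (2 : ℤ) = g * g
      rw [show (2 : ℤ) = 1 + 1 from rfl, zpow_add, zpow_one]⟩
  exact this hy

/-- The universal contradiction lemma: if `c₀ :: (s ++ [d])` is reduced then
`c₀ * s.prod * d * s.prod⁻¹` is unbounded. -/
theorem gate_contra (hG : IsAmalgamatedProduct A B) {c₀ d : G} {s : List G}
    (hsd : IsReducedWord A B (c₀ :: (s ++ [d]))) {g : G}
    (hg : g = c₀ * s.prod * d * s.prod⁻¹) : ¬ BoundedElement A B g := by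
  obtain ⟨hc₀, hrest, hhead⟩ := red_cons_iff.mp hsd
  have hsand : IsReducedWord A B (s ++ [d] ++ invw s) := red_sandwich hrest
  rcases s with _ | ⟨a, s'⟩
  · -- s = [], word is [c₀, d]
    have hred : IsReducedWord A B ((c₀ :: []) ++ [d]) := by simpa using hsd
    have hopp : Opp A B d c₀ := opp_symm (hhead d (by simp))
    have := unbounded_cyc hG hred hopp
    simpa [hg] using this
  · -- s = a :: s'
    have hopp_ca : Opp A B c₀ a := hhead a (by simp)
    have hw : IsReducedWord A B ((c₀ :: ((a :: s') ++ [d] ++ invw s')) ++ [a⁻¹]) := by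
      have heq : (c₀ :: ((a :: s') ++ [d] ++ invw s')) ++ [a⁻¹] =
          c₀ :: ((a :: s') ++ [d] ++ invw (a :: s')) := by
        rw [invw_cons]; simp
      rw [heq, red_cons_iff]
      refine ⟨hc₀, hsand, ?_⟩
      intro b hb
      simp only [List.cons_append, List.head?_cons, Option.mem_some_iff] at hb
      subst hb
      exact hopp_ca
    have hcyc : Opp A B a⁻¹ c₀ := opp_symm (opp_st_right st_inv hopp_ca)
    have := unbounded_cyc hG hw hcyc
    intro hbd
    refine this ?_
    have heq : ((c₀ :: ((a :: s') ++ [d] ++ invw s')) ++ [a⁻¹]).prod = g := by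
      rw [hg]
      simp only [List.prod_cons, List.prod_append, List.prod_singleton, List.prod_nil,
        prod_invw]
      group
    rwa [heq]

/-- Every bounded element is conjugate into a factor. -/
theorem conj_into_factor (hG : IsAmalgamatedProduct A B) {g : G}
    (hb : BoundedElement A B g) : ∃ x : G, x⁻¹ * g * x ∈ A ∨ x⁻¹ * g * x ∈ B := by
  suffices h : ∀ (n : ℕ) (g : G), amalgLen A B g ≤ n → BoundedElement A B g →
      ∃ x : G, x⁻¹ * g * x ∈ A ∨ x⁻¹ * g * x ∈ B from
    h (amalgLen A B g) g le_rfl hb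
  intro n
  induction n with
  | zero =>
    intro g hlen _
    rcases exists_rep hG g with ⟨w, hw, hp⟩ | hC
    · rw [← hp, amalgLen_eq hG hw, Nat.le_zero, List.length_eq_zero_iff] at hlen
      subst hlen
      simp only [List.prod_nil] at hp
      exact ⟨1, Or.inl (by rw [← hp]; simpa using one_mem A)⟩
    · exact ⟨1, Or.inl (by simpa using hC.1)⟩
  | succ n ih =>
    intro g hlen hb
    rcases exists_rep hG g with ⟨w, hw, hp⟩ | hC
    · rcases w with _ | ⟨z, w'⟩
      · simp only [List.prod_nil] at hp
        exact ⟨1, Or.inl (by rw [← hp]; simpa using one_mem A)⟩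
      · rcases List.eq_nil_or_concat' w' with rfl | ⟨t, zl, rfl⟩
        · simp only [List.prod_singleton] at hp
          refine ⟨1, ?_⟩
          have hz : Ltr A B z := hw.1 z (by simp)
          rcases hz.1 with h | h
          · exact Or.inl (by rw [← hp]; simpa using h)
          · exact Or.inr (by rw [← hp]; simpa using h)
        · -- w = z :: (t ++ [zl]), length ≥ 2
          by_cases hcyc : Opp A B zl z
          · exfalso
            have hred : IsReducedWord A B ((z :: t) ++ [zl]) := by simpa using hw
            have hpe : ((z :: t) ++ [zl]).prod = g := by rw [← hp]; simp [mul_assoc]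
            exact unbounded_cyc hG hred hcyc (by rw [hpe]; exact hb)
          · have hz : Ltr A B z := hw.1 z (by simp)
            have hzl : Ltr A B zl := hw.1 zl (by simp)
            have hsame : (zl ∈ A ∧ z ∈ A) ∨ (zl ∈ B ∧ z ∈ B) := by
              unfold Opp at hcyc; tauto
            have hredtail : IsReducedWord A B (t ++ [zl]) :=
              (red_cons_iff.mp (show IsReducedWord A B (z :: (t ++ [zl])) by simpa using hw)).2.1
            have hg' : z⁻¹ * g * z = t.prod * (zl * z) := by
              rw [← hp]
              simp only [List.cons_append, List.prod_cons, List.prod_append,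
                List.prod_singleton, List.prod_nil, one_mul, mul_one]
              group
            have hb' : BoundedElement A B (z⁻¹ * g * z) := bounded_conj hG z hb
            by_cases hpC : zl * z ∈ A ∧ zl * z ∈ B
            · rcases List.eq_nil_or_concat' t with rfl | ⟨t', z', rfl⟩
              · refine ⟨z, ?_⟩
                rw [hg']
                simp only [List.prod_nil, one_mul]
                exact Or.inl hpC.1
              · have hred2 : IsReducedWord A B (t' ++ [z' * (zl * z)]) :=
                  red_replaceLast (red_of_red_append_left hredtail)
                    (st_symm (st_mul_c hpC.1 hpC.2))
                have hp2 : (t' ++ [z' * (zl * z)]).prod = z⁻¹ * g * z := by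
                  rw [hg']
                  simp only [List.prod_append, List.prod_singleton]
                  group
                have hlen2 : amalgLen A B (z⁻¹ * g * z) ≤ n := by
                  rw [← hp2, amalgLen_eq hG hred2]
                  have : amalgLen A B g = (z :: (t' ++ [z'] ++ [zl])).length := by
                    rw [← hp, ← amalgLen_eq hG hw]
                  simp only [List.length_append, List.length_cons,
                    List.length_singleton] at this hlen ⊢
                  omega
                obtain ⟨x, hx⟩ := ih (z⁻¹ * g * z) hlen2 hb'
                refine ⟨z * x, ?_⟩
                rwa [show (z * x)⁻¹ * g * (z * x) = x⁻¹ * (z⁻¹ * g * z) * x by group]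
            · have hltr : Ltr A B (zl * z) := by
                refine ⟨?_, hpC⟩
                rcases hsame with ⟨h1, h2⟩ | ⟨h1, h2⟩
                · exact Or.inl (mul_mem h1 h2)
                · exact Or.inr (mul_mem h1 h2)
              have hst : ST A B zl (zl * z) := by
                rcases hsame with ⟨h1, h2⟩ | ⟨h1, h2⟩
                · exact ⟨iff_of_true h1 (mul_mem h1 h2),
                    iff_of_false (fun hx => hzl.2 ⟨h1, hx⟩) (fun hx => hpC ⟨mul_mem h1 h2, hx⟩)⟩
                · exact ⟨iff_of_false (fun hx => hzl.2 ⟨hx, h1⟩) (fun hx => hpC ⟨hx, mul_mem h1 h2⟩),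
                    iff_of_true h1 (mul_mem h1 h2)⟩
              have hred2 : IsReducedWord A B (t ++ [zl * z]) := red_replaceLast hredtail hst
              have hp2 : (t ++ [zl * z]).prod = z⁻¹ * g * z := by
                rw [hg', List.prod_append, List.prod_singleton]
              have hlen2 : amalgLen A B (z⁻¹ * g * z) ≤ n := by
                rw [← hp2, amalgLen_eq hG hred2]
                have : amalgLen A B g = (z :: (t ++ [zl])).length := by
                  rw [← hp, ← amalgLen_eq hG hw]
                simp only [List.length_append, List.length_cons,
                  List.length_singleton] at this hlen ⊢
                omega
              obtain ⟨x, hx⟩ := ih (z⁻¹ * g * z) hlen2 hb'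
              refine ⟨z * x, ?_⟩
              rwa [show (z * x)⁻¹ * g * (z * x) = x⁻¹ * (z⁻¹ * g * z) * x by group]
    · exact ⟨1, Or.inl (by simpa using hC.1)⟩

/-- Minimal conjugation decomposition of a bounded element not in `A ⊓ B`. -/
theorem min_decomp (hG : IsAmalgamatedProduct A B) {g : G} (hb : BoundedElement A B g)
    (hgC : ¬(g ∈ A ∧ g ∈ B)) :
    ∃ (u : List G) (c : G), IsReducedWord A B (u ++ [c] ++ invw u) ∧
      (u ++ [c] ++ invw u).prod = g := by
  -- if g itself lies in a factor we are done
  have easy : (g ∈ A ∨ g ∈ B) → ∃ (u : List G) (c : G),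
      IsReducedWord A B (u ++ [c] ++ invw u) ∧ (u ++ [c] ++ invw u).prod = g := by
    intro hor
    exact ⟨[], g, by simpa [invw_nil] using red_singleton ⟨hor, hgC⟩, by simp [invw_nil]⟩
  set S : Set ℕ := {n | ∃ x : G, amalgLen A B x = n ∧ (x⁻¹ * g * x ∈ A ∨ x⁻¹ * g * x ∈ B)}
    with hS
  have hSne : S.Nonempty := by
    obtain ⟨x, hx⟩ := conj_into_factor hG hb
    exact ⟨amalgLen A B x, x, rfl, hx⟩
  obtain ⟨x, hxlen, hxf⟩ := Nat.sInf_mem hSne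
  rcases exists_rep hG x with ⟨u₀, hu₀, hpu₀⟩ | hxC
  · rcases List.eq_nil_or_concat' u₀ with rfl | ⟨t, z, rfl⟩
    · simp only [List.prod_nil] at hpu₀
      subst hpu₀
      refine easy ?_
      simpa using hxf
    · -- minimality argument
      have hmin : ¬(t.prod⁻¹ * g * t.prod ∈ A ∨ t.prod⁻¹ * g * t.prod ∈ B) := by
        intro hcon
        have hle : sInf S ≤ amalgLen A B t.prod := Nat.sInf_le ⟨t.prod, rfl, hcon⟩
        have h1 : amalgLen A B t.prod ≤ t.length :=
          amalgLen_le (red_of_red_append_left hu₀) rfl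
        have h2 : sInf S = t.length + 1 := by
          rw [← hxlen, ← hpu₀, amalgLen_eq hG hu₀]
          simp
        omega
      have hz : Ltr A B z := hu₀.1 z (by simp)
      have hkey : t.prod⁻¹ * g * t.prod = z * (x⁻¹ * g * x) * z⁻¹ := by
        rw [← hpu₀]
        simp only [List.prod_append, List.prod_singleton]
        group
      set c' := x⁻¹ * g * x with hc'
      have hcltr : ¬(c' ∈ A ∧ c' ∈ B) := by
        rintro ⟨hA, hB⟩
        refine hmin ?_
        rw [hkey]
        rcases hz.1 with h | h
        · exact Or.inl (mul_mem (mul_mem h hA) (inv_mem h))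
        · exact Or.inr (mul_mem (mul_mem h hB) (inv_mem h))
      have hopp : Opp A B z c' := by
        by_contra hno
        have : (z ∈ A ∧ c' ∈ A) ∨ (z ∈ B ∧ c' ∈ B) := by unfold Opp at hno; tauto
        refine hmin ?_
        rw [hkey]
        rcases this with ⟨h1, h2⟩ | ⟨h1, h2⟩
        · exact Or.inl (mul_mem (mul_mem h1 h2) (inv_mem h1))
        · exact Or.inr (mul_mem (mul_mem h1 h2) (inv_mem h1))
      refine ⟨t ++ [z], c', red_sandwich ?_, ?_⟩
      · rw [List.append_assoc, red_append_iff]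
        refine ⟨red_of_red_append_left hu₀, ?_, ?_⟩
        · rw [red_append_iff]
          refine ⟨red_singleton hz, red_singleton ⟨?_, hcltr⟩, ?_⟩
          · rcases hxf with h | h
            · exact Or.inl h
            · exact Or.inr h
          · intro a ha b hb
            simp only [show ([z] : List G).getLast? = some z from rfl,
              List.head?_cons, Option.mem_some_iff] at ha hb
            subst ha; subst hb; exact hopp
        · intro a ha b hb
          simp only [List.cons_append, List.head?_cons, Option.mem_some_iff] at hb
          subst hb
          have := (red_append_iff.mp hu₀).2.2 a ha z (Option.mem_some_iff.mpr rfl)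
          exact this
      · rw [prod_sandwich, hpu₀, hc']
        group
  · refine easy ?_
    rcases hxf with h | h
    · exact Or.inl (by
        have : g = x * (x⁻¹ * g * x) * x⁻¹ := by group
        rw [this]
        exact mul_mem (mul_mem hxC.1 h) (inv_mem hxC.1))
    · exact Or.inr (by
        have : g = x * (x⁻¹ * g * x) * x⁻¹ := by group
        rw [this]
        exact mul_mem (mul_mem hxC.2 h) (inv_mem hxC.2))

end Bounded

section Gate

variable {G : Type*} [Group G] {A B : Subgroup G}

theorem red_peel {z c : G} {u' : List G}
    (h : IsReducedWord A B ((z :: u') ++ [c] ++ invw (z :: u'))) :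
    IsReducedWord A B (u' ++ [c] ++ invw u') := by
  have heq : (z :: u') ++ [c] ++ invw (z :: u') =
      z :: ((u' ++ [c] ++ invw u') ++ [z⁻¹]) := by
    rw [invw_cons]; simp
  rw [heq] at h
  exact red_of_red_append_left (red_cons_iff.mp h).2.1

theorem gate (hG : IsAmalgamatedProduct A B) :
    ∀ (m : ℕ) (u : List G) (c₀ h : G), u.length = m →
      IsReducedWord A B (u ++ [c₀] ++ invw u) → c₀ ∈ A → c₀ ∉ B →
      BoundedElement A B ((u ++ [c₀] ++ invw u).prod * h) →
      ((h ∈ A ∧ h ∈ B) ∨ ∃ (v : List G) (c : G), IsReducedWord A B (v ++ [c] ++ invw v) ∧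
          (v ++ [c] ++ invw v).prod = h ∧ v.length ≤ m) →
      u.prod⁻¹ * h * u.prod ∈ A := by
  intro m
  induction m with
  | zero =>
    intro u c₀ h hlen hred hc₀A hc₀B hbnd hh
    have hu : u = [] := List.length_eq_zero_iff.mp hlen
    subst hu
    simp only [List.prod_nil, inv_one, one_mul, mul_one]
    rcases hh with hC | ⟨v, c, hv, hvp, hvl⟩
    · exact hC.1
    · have hv0 : v = [] := List.length_eq_zero_iff.mp (Nat.le_zero.mp hvl)
      subst hv0
      have hv' : IsReducedWord A B [c] := by simpa [invw_nil] using hv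
      have hceq : c = h := by simpa [invw_nil] using hvp
      have hcL : Ltr A B c := ltr_of_red_singleton hv'
      by_cases hcA : c ∈ A
      · rw [← hceq]; exact hcA
      · exfalso
        have hcB : c ∈ B := by rcases hcL.1 with h' | h'; exact absurd h' hcA; exact h'
        have hc₀L : Ltr A B c₀ := ⟨Or.inl hc₀A, fun hx => hc₀B hx.2⟩
        have hsd : IsReducedWord A B (c₀ :: (([] : List G) ++ [c])) := by
          rw [red_cons_iff]
          refine ⟨hc₀L, by simpa using hv', ?_⟩
          intro y hy
          simp only [List.nil_append, List.head?_cons, Option.mem_some_iff] at hy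
          subst hy
          exact ⟨fun hx => hcA hx.2, fun hx => hc₀B hx.1⟩
        have hgeq : (([] : List G) ++ [c₀] ++ invw []).prod * h =
            c₀ * ([] : List G).prod * c * ([] : List G).prod⁻¹ := by
          simp [invw_nil, ← hceq]
        exact gate_contra hG hsd hgeq hbnd
  | succ m ih =>
    intro u c₀ h hlen hred hc₀A hc₀B hbnd hh
    rcases u with _ | ⟨z, u'⟩
    · simp at hlen
    · have hlen' : u'.length = m := by simpa using hlen
      -- decompose the reduced decomposition of g₀
      obtain ⟨hredu_c, hredinv, hJ2⟩ := red_append_iff.mp hred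
      obtain ⟨hredu, hredc0, hJ1⟩ := red_append_iff.mp hredu_c
      have hc₀L : Ltr A B c₀ := ltr_of_red_singleton hredc0
      have hzL : Ltr A B z := hredu.1 z (by simp)
      have hred' : IsReducedWord A B (u' ++ [c₀] ++ invw u') := red_peel hred
      -- the boundedness hypothesis transported one step down
      have hbmain : BoundedElement A B ((u' ++ [c₀] ++ invw u').prod * (z⁻¹ * h * z)) := by
        have heq : (u' ++ [c₀] ++ invw u').prod * (z⁻¹ * h * z) =
            z⁻¹ * (((z :: u') ++ [c₀] ++ invw (z :: u')).prod * h) * z := by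
          rw [prod_sandwich, prod_sandwich]
          simp only [List.prod_cons]
          group
        rw [heq]
        exact bounded_conj hG z hbnd
      -- recursion helper
      have recurse : (((z⁻¹ * h * z) ∈ A ∧ (z⁻¹ * h * z) ∈ B) ∨
          ∃ (v : List G) (c : G), IsReducedWord A B (v ++ [c] ++ invw v) ∧
            (v ++ [c] ++ invw v).prod = z⁻¹ * h * z ∧ v.length ≤ m) →
          (z :: u').prod⁻¹ * h * (z :: u').prod ∈ A := by
        intro hh'
        have hrec := ih u' c₀ (z⁻¹ * h * z) hlen' hred' hc₀A hc₀B hbmain hh'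
        have heq : (z :: u').prod⁻¹ * h * (z :: u').prod =
            u'.prod⁻¹ * (z⁻¹ * h * z) * u'.prod := by
          simp only [List.prod_cons]
          group
        rw [heq]
        exact hrec
      -- helper to build the rhs disjunct for letters / central elements
      have mk_hh : ∀ w : G, (w ∈ A ∨ w ∈ B) → ((w ∈ A ∧ w ∈ B) ∨
          ∃ (v : List G) (c : G), IsReducedWord A B (v ++ [c] ++ invw v) ∧
            (v ++ [c] ++ invw v).prod = w ∧ v.length ≤ m) := by
        intro w hw
        by_cases hwC : w ∈ A ∧ w ∈ B
        · exact Or.inl hwC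
        · exact Or.inr ⟨[], w, by simpa [invw_nil] using red_singleton ⟨hw, hwC⟩,
            by simp [invw_nil], by simp⟩
      -- helper for contradictions
      have contra : ∀ (s : List G) (d : G), IsReducedWord A B (c₀ :: (s ++ [d])) →
          (z :: u').prod⁻¹ * h * (z :: u').prod = s.prod * (d * s.prod⁻¹) → False := by
        intro s d hsd hval
        have hgeq : ((z :: u') ++ [c₀] ++ invw (z :: u')).prod * h =
            ((z :: u').prod * c₀ * (z :: u').prod⁻¹) * h := by
          rw [prod_sandwich]
        have hgeq2 : (z :: u').prod⁻¹ * (((z :: u') ++ [c₀] ++ invw (z :: u')).prod * h) *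
            (z :: u').prod = c₀ * s.prod * d * s.prod⁻¹ := by
          rw [hgeq]
          have : (z :: u').prod⁻¹ * ((z :: u').prod * c₀ * (z :: u').prod⁻¹ * h) *
              (z :: u').prod = c₀ * ((z :: u').prod⁻¹ * h * (z :: u').prod) := by group
          rw [this, hval]
          group
        exact gate_contra hG hsd hgeq2.symm.symm (bounded_conj hG (z :: u').prod hbnd)
      rcases hh with hC | ⟨v, c, hv, hvp, hvl⟩
      · -- h is central
        rcases hzL.1 with hzA | hzB
        · exact recurse (mk_hh _ (Or.inl (mul_mem (mul_mem (inv_mem hzA) hC.1) hzA)))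
        · exact recurse (mk_hh _ (Or.inr (mul_mem (mul_mem (inv_mem hzB) hC.2) hzB)))
      · rcases v with _ | ⟨zh, v'⟩
        · -- h is a letter c
          have hv' : IsReducedWord A B [c] := by simpa [invw_nil] using hv
          have hceq : c = h := by simpa [invw_nil] using hvp
          have hcL : Ltr A B c := ltr_of_red_singleton hv'
          by_cases hopp : Opp A B z c
          · -- contradiction (i)
            exfalso
            have hinvne : invw (z :: u') ≠ [] := by
              rw [invw_cons]; simp
            have hsd : IsReducedWord A B (c₀ :: (invw (z :: u') ++ [c])) := by
              rw [red_cons_iff]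
              refine ⟨hc₀L, ?_, ?_⟩
              · rw [red_append_iff]
                refine ⟨hredinv, red_singleton hcL, ?_⟩
                intro x hx y hy
                simp only [List.head?_cons, Option.mem_some_iff] at hy
                subst hy
                rw [getLast?_invw] at hx
                simp only [Option.mem_def, Option.map_eq_some_iff] at hx
                obtain ⟨a, ha1, ha2⟩ := hx
                simp only [List.head?_cons, Option.some.injEq] at ha1
                rw [← ha2, ← ha1]
                exact opp_st_left st_inv hopp
              · intro y hy
                rw [List.head?_append_of_ne_nil _ hinvne] at hy
                exact hJ2 c₀ (by rw [getLast?_app_singleton]; exact Option.mem_some_iff.mpr rfl)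
                  y hy
            refine contra (invw (z :: u')) c hsd ?_
            rw [prod_invw, ← hceq]
            group
          · -- same factor: recurse
            have hsame : (z ∈ A ∧ c ∈ A) ∨ (z ∈ B ∧ c ∈ B) := by
              unfold Opp at hopp; tauto
            refine recurse (mk_hh _ ?_)
            rcases hsame with ⟨h1, h2⟩ | ⟨h1, h2⟩
            · exact Or.inl (by rw [← hceq]; exact mul_mem (mul_mem (inv_mem h1) h2) h1)
            · exact Or.inr (by rw [← hceq]; exact mul_mem (mul_mem (inv_mem h1) h2) h1)
        · -- v = zh :: v'
          obtain ⟨hv_c, hv_inv, hK2⟩ := red_append_iff.mp hv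
          obtain ⟨hvw, hvc, hK1⟩ := red_append_iff.mp hv_c
          have hcL : Ltr A B c := ltr_of_red_singleton hvc
          have hzhL : Ltr A B zh := hvw.1 zh (by simp)
          have hv'' : IsReducedWord A B (v' ++ [c] ++ invw v') := red_peel hv
          by_cases hC' : z⁻¹ * zh ∈ A ∧ z⁻¹ * zh ∈ B
          · -- same edge: recurse
            rcases v' with _ | ⟨h₁, v''⟩
            · -- v' = []
              have hmem : z⁻¹ * h * z ∈ A ∨ z⁻¹ * h * z ∈ B := by
                have hform : z⁻¹ * h * z = (z⁻¹ * zh) * c * (z⁻¹ * zh)⁻¹ := by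
                  rw [← hvp, prod_sandwich]
                  simp only [List.prod_singleton]
                  group
                rcases hcL.1 with h1 | h1
                · refine Or.inl ?_
                  rw [hform]
                  exact mul_mem (mul_mem hC'.1 h1) (inv_mem hC'.1)
                · refine Or.inr ?_
                  rw [hform]
                  exact mul_mem (mul_mem hC'.2 h1) (inv_mem hC'.2)
              exact recurse (mk_hh _ hmem)
            · -- v' = h₁ :: v''
              have hpeel : IsReducedWord A B ((h₁ :: v'') ++ [c] ++ invw (h₁ :: v'')) := hv''
              have heq1 : (h₁ :: v'') ++ [c] ++ invw (h₁ :: v'') =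
                  (h₁ :: (v'' ++ [c] ++ invw v'')) ++ [h₁⁻¹] := by
                rw [invw_cons]; simp
              rw [heq1] at hpeel
              have hstep1 : IsReducedWord A B
                  ((h₁ :: (v'' ++ [c] ++ invw v'')) ++ [h₁⁻¹ * (z⁻¹ * zh)⁻¹]) :=
                red_replaceLast hpeel (st_symm (st_mul_c (inv_mem hC'.1) (inv_mem hC'.2)))
              have hstep2 : IsReducedWord A B
                  (((z⁻¹ * zh) * h₁) :: ((v'' ++ [c] ++ invw v'') ++ [h₁⁻¹ * (z⁻¹ * zh)⁻¹])) := by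
                refine red_replaceHead ?_ (st_symm (st_c_mul hC'.1 hC'.2))
                simpa using hstep1
              have hfin : IsReducedWord A B
                  ((((z⁻¹ * zh) * h₁) :: v'') ++ [c] ++ invw (((z⁻¹ * zh) * h₁) :: v'')) := by
                have heq2 : (((z⁻¹ * zh) * h₁) :: v'') ++ [c] ++ invw (((z⁻¹ * zh) * h₁) :: v'') =
                    ((z⁻¹ * zh) * h₁) :: ((v'' ++ [c] ++ invw v'') ++ [h₁⁻¹ * (z⁻¹ * zh)⁻¹]) := by
                  rw [invw_cons, mul_inv_rev]; simp
                rw [heq2]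
                exact hstep2
              refine recurse (Or.inr ⟨((z⁻¹ * zh) * h₁) :: v'', c, hfin, ?_, ?_⟩)
              · rw [prod_sandwich, ← hvp, prod_sandwich]
                simp only [List.prod_cons]
                group
              · have : (zh :: h₁ :: v'').length ≤ m + 1 := hvl
                simp only [List.length_cons] at this ⊢
                omega
          · -- different edge: contradictions
            by_cases hopp : Opp A B z zh
            · -- contradiction (ii)
              exfalso
              have hinvne : invw (z :: u') ≠ [] := by rw [invw_cons]; simp
              have hsd : IsReducedWord A B (c₀ :: ((invw (z :: u') ++ (zh :: v')) ++ [c])) := by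
                rw [red_cons_iff]
                constructor
                · exact hc₀L
                constructor
                · rw [List.append_assoc, red_append_iff]
                  refine ⟨hredinv, ?_, ?_⟩
                  · exact (by simpa using hv_c : IsReducedWord A B ((zh :: v') ++ [c]))
                  · intro x hx y hy
                    simp only [List.cons_append, List.head?_cons, Option.mem_some_iff] at hy
                    subst hy
                    rw [getLast?_invw] at hx
                    simp only [Option.mem_def, Option.map_eq_some_iff] at hx
                    obtain ⟨a, ha1, ha2⟩ := hx
                    simp only [List.head?_cons, Option.some.injEq] at ha1
                    rw [← ha2, ← ha1]
                    exact opp_st_left st_inv hopp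
                · intro y hy
                  rw [List.append_assoc, List.head?_append_of_ne_nil _ hinvne] at hy
                  exact hJ2 c₀
                    (by rw [getLast?_app_singleton]; exact Option.mem_some_iff.mpr rfl) y hy
              refine contra (invw (z :: u') ++ (zh :: v')) c hsd ?_
              rw [List.prod_append, prod_invw, ← hvp, prod_sandwich]
              group
            · -- contradiction (iii)
              exfalso
              have hsame : (z ∈ A ∧ zh ∈ A) ∨ (z ∈ B ∧ zh ∈ B) := by
                unfold Opp at hopp; tauto
              have hcL'' : Ltr A B (z⁻¹ * zh) := by
                refine ⟨?_, hC'⟩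
                rcases hsame with ⟨h1, h2⟩ | ⟨h1, h2⟩
                · exact Or.inl (mul_mem (inv_mem h1) h2)
                · exact Or.inr (mul_mem (inv_mem h1) h2)
              have hst_zh : ST A B zh (z⁻¹ * zh) := by
                rcases hsame with ⟨h1, h2⟩ | ⟨h1, h2⟩
                · exact ⟨iff_of_true h2 (mul_mem (inv_mem h1) h2),
                    iff_of_false (fun hx => hzhL.2 ⟨h2, hx⟩) (fun hx => hC' ⟨mul_mem (inv_mem h1) h2, hx⟩)⟩
                · exact ⟨iff_of_false (fun hx => hzhL.2 ⟨hx, h2⟩) (fun hx => hC' ⟨hx, mul_mem (inv_mem h1) h2⟩),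
                    iff_of_true h2 (mul_mem (inv_mem h1) h2)⟩
              have hst_z : ST A B z (z⁻¹ * zh) := by
                rcases hsame with ⟨h1, h2⟩ | ⟨h1, h2⟩
                · exact ⟨iff_of_true h1 (mul_mem (inv_mem h1) h2),
                    iff_of_false (fun hx => hzL.2 ⟨h1, hx⟩) (fun hx => hC' ⟨mul_mem (inv_mem h1) h2, hx⟩)⟩
                · exact ⟨iff_of_false (fun hx => hzL.2 ⟨hx, h1⟩) (fun hx => hC' ⟨hx, mul_mem (inv_mem h1) h2⟩),
                    iff_of_true h1 (mul_mem (inv_mem h1) h2)⟩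
              -- Red (v' ++ [c]) together with head junction from zh
              have hv'c : IsReducedWord A B (zh :: (v' ++ [c])) := by simpa using hv_c
              obtain ⟨_, hv'c_red, hv'c_head⟩ := red_cons_iff.mp hv'c
              -- Red (invw u')
              have hredinv' : IsReducedWord A B (invw u') := by
                have : invw (z :: u') = invw u' ++ [z⁻¹] := invw_cons z u'
                rw [this] at hredinv
                exact red_of_red_append_left hredinv
              have hsd : IsReducedWord A B
                  (c₀ :: ((invw u' ++ [z⁻¹ * zh] ++ v') ++ [c])) := by
                have hshape : (invw u' ++ [z⁻¹ * zh] ++ v') ++ [c] =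
                    invw u' ++ ((z⁻¹ * zh) :: (v' ++ [c])) := by simp
                rw [red_cons_iff, hshape]
                constructor
                · exact hc₀L
                constructor
                · rw [red_append_iff]
                  refine ⟨hredinv', ?_, ?_⟩
                  · rw [red_cons_iff]
                    exact ⟨hcL'', hv'c_red, fun y hy => opp_st_left hst_zh (hv'c_head y hy)⟩
                  · intro x hx y hy
                    simp only [List.head?_cons, Option.mem_some_iff] at hy
                    subst hy
                    rw [getLast?_invw] at hx
                    simp only [Option.mem_def, Option.map_eq_some_iff] at hx
                    obtain ⟨a, ha1, ha2⟩ := hx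
                    -- a is the head of u', Opp z a holds
                    have hopp_za : Opp A B z a := by
                      have := (red_cons_iff.mp hredu).2.2 a (by
                        rw [Option.mem_def]; exact ha1)
                      exact this
                    rw [← ha2]
                    exact opp_st_right hst_z (opp_st_left st_inv (opp_symm hopp_za))
                · intro y hy
                  rcases List.eq_nil_or_concat' u' with hu' | ⟨t', zl', hu'⟩
                  · subst hu'
                    simp only [invw_nil, List.nil_append, List.head?_cons,
                      Option.mem_some_iff] at hy
                    subst hy
                    -- Opp c₀ (z⁻¹ * zh): from hJ2 : Opp c₀ z⁻¹
                    have hj : Opp A B c₀ z⁻¹ := by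
                      have := hJ2 c₀
                        (by rw [getLast?_app_singleton]; exact Option.mem_some_iff.mpr rfl)
                        z⁻¹ ?_
                      · exact this
                      · rw [head?_invw]
                        simp
                    exact opp_st_right (st_trans (st_symm st_inv) hst_z) hj
                  · subst hu'
                    have hne : invw (t' ++ [zl']) ≠ [] := by
                      rw [invw_append]; simp [invw_singleton]
                    rw [List.head?_append_of_ne_nil _ hne] at hy
                    refine hJ2 c₀
                      (by rw [getLast?_app_singleton]; exact Option.mem_some_iff.mpr rfl) y ?_
                    rw [invw_cons, List.head?_append_of_ne_nil _ hne]
                    exact hy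
              refine contra (invw u' ++ [z⁻¹ * zh] ++ v') c hsd ?_
              rw [List.prod_append, List.prod_append, prod_invw, List.prod_singleton,
                ← hvp, prod_sandwich]
              simp only [List.prod_cons]
              group

end Gate

section Final

variable {G : Type*} [Group G]

theorem red_swap {A B : Subgroup G} {w : List G} (h : IsReducedWord A B w) :
    IsReducedWord B A w := by
  obtain ⟨h1, h2⟩ := h
  refine ⟨fun x hx => ?_, h2.imp fun a b hab => ?_⟩
  · have := h1 x hx; tauto
  · exact ⟨hab.2, hab.1⟩

theorem amalgLen_swap (A B : Subgroup G) (g : G) : amalgLen B A g = amalgLen A B g := by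
  unfold amalgLen
  congr 1
  ext r
  constructor <;> rintro ⟨w, hw, hp, hl⟩ <;> exact ⟨w, red_swap hw, hp, hl⟩

theorem amalg_swap {A B : Subgroup G} (hG : IsAmalgamatedProduct A B) :
    IsAmalgamatedProduct B A :=
  ⟨by rw [sup_comm]; exact hG.1, fun w hw h2 => hG.2 w (red_swap hw) h2⟩

theorem boundedElement_swap {A B : Subgroup G} {g : G} (h : BoundedElement A B g) :
    BoundedElement B A g := by
  obtain ⟨N, hN⟩ := h
  exact ⟨N, fun x hx => by rw [amalgLen_swap]; exact hN x hx⟩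

theorem len_le_one_of_factor {A B : Subgroup G} (hG : IsAmalgamatedProduct A B) {a : G}
    (ha : a ∈ A ∨ a ∈ B) : amalgLen A B a ≤ 1 := by
  by_cases hC : a ∈ A ∧ a ∈ B
  · rw [amalgLen_central hG hC.1 hC.2]; omega
  · exact amalgLen_le (red_singleton ⟨ha, hC⟩) (List.prod_singleton)

theorem easy_half {A B : Subgroup G} (hG : IsAmalgamatedProduct A B) {H : Subgroup G}
    {x g : G} (hgH : g ∈ H) (hx : ∀ h ∈ H, x⁻¹ * h * x ∈ A) : BoundedElement A B g := by
  refine ⟨amalgLen A B x + 1 + amalgLen A B x⁻¹, ?_⟩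
  intro h hh
  have hhH : h ∈ H := (Subgroup.zpowers_le.mpr hgH) hh
  have ha := hx h hhH
  have heq : h = x * (x⁻¹ * h * x) * x⁻¹ := by group
  calc amalgLen A B h = amalgLen A B (x * (x⁻¹ * h * x) * x⁻¹) := by rw [← heq]
    _ ≤ amalgLen A B (x * (x⁻¹ * h * x)) + amalgLen A B x⁻¹ := amalgLen_subadd hG _ _
    _ ≤ amalgLen A B x + amalgLen A B (x⁻¹ * h * x) + amalgLen A B x⁻¹ := by
        have := amalgLen_subadd hG x (x⁻¹ * h * x); omega
    _ ≤ _ := by have := len_le_one_of_factor hG (Or.inl ha); omega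

theorem conj_closure_mem {A : Subgroup G} {s : Set G} {x h : G}
    (hmem : ∀ g ∈ s, x⁻¹ * g * x ∈ A) (hh : h ∈ Subgroup.closure s) :
    x⁻¹ * h * x ∈ A := by
  induction hh using Subgroup.closure_induction with
  | mem g hg => exact hmem g hg
  | one => simpa using one_mem A
  | mul a b _ _ ha hb =>
      have := mul_mem ha hb
      rwa [show (x⁻¹ * a * x) * (x⁻¹ * b * x) = x⁻¹ * (a * b) * x by group] at this
  | inv a _ ha =>
      have := inv_mem ha
      rwa [show (x⁻¹ * a * x)⁻¹ = x⁻¹ * a⁻¹ * x by group] at this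

theorem hard_key {A B : Subgroup G} (hG : IsAmalgamatedProduct A B) {k : ℕ}
    (g : Fin (k + 1) → G)
    (hb : ∀ j, BoundedElement A B (g j))
    (hb2 : ∀ j, BoundedElement A B (g 0 * g j))
    (hmax : ∀ j, amalgLen A B (g j) ≤ amalgLen A B (g 0))
    {u : List G} {c₀ : G} (hred : IsReducedWord A B (u ++ [c₀] ++ invw u))
    (hprod : (u ++ [c₀] ++ invw u).prod = g 0) (hcA : c₀ ∈ A) (hcB : c₀ ∉ B) :
    ∀ j, u.prod⁻¹ * g j * u.prod ∈ A := by
  intro j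
  refine gate hG u.length u c₀ (g j) rfl hred hcA hcB ?_ ?_
  · rw [hprod]; exact hb2 j
  · by_cases hjC : g j ∈ A ∧ g j ∈ B
    · exact Or.inl hjC
    · obtain ⟨v, c, hv, hvp⟩ := min_decomp hG (hb j) hjC
      refine Or.inr ⟨v, c, hv, hvp, ?_⟩
      have l1 : amalgLen A B (g j) = 2 * v.length + 1 := by
        rw [← hvp, amalgLen_eq hG hv]
        simp only [List.length_append, List.length_cons, List.length_nil, length_invw]
        omega
      have l2 : amalgLen A B (g 0) = 2 * u.length + 1 := by
        rw [← hprod, amalgLen_eq hG hred]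
        simp only [List.length_append, List.length_cons, List.length_nil, length_invw]
        omega
      have := hmax j
      omega

end Final

end AmalgAux


theorem stmt0 (A B : Subgroup G) (hG : IsAmalgamatedProduct A B)
    (n : ℕ) (g : Fin (n + 1) → G) (H : Subgroup G)
    (hH : H = Subgroup.closure (Set.range g))
    (hmax : ∀ j, amalgLen A B (g j) ≤ amalgLen A B (g 0)) :
    (∃ x : G, (∀ h ∈ H, x⁻¹ * h * x ∈ A) ∨ (∀ h ∈ H, x⁻¹ * h * x ∈ B)) ↔
      ((∀ j, BoundedElement A B (g j)) ∧
        ∀ j, j ≠ 0 → BoundedElement A B (g 0 * g j)) := by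
  have hmemH : ∀ j, g j ∈ H := fun j => by
    rw [hH]; exact Subgroup.subset_closure (Set.mem_range_self j)
  constructor
  · rintro ⟨x, hx | hx⟩
    · exact ⟨fun j => AmalgAux.easy_half hG (hmemH j) hx,
        fun j _ => AmalgAux.easy_half hG (mul_mem (hmemH 0) (hmemH j)) hx⟩
    · refine ⟨fun j => ?_, fun j _ => ?_⟩
      · exact AmalgAux.boundedElement_swap
          (AmalgAux.easy_half (AmalgAux.amalg_swap hG) (hmemH j) hx)
      · exact AmalgAux.boundedElement_swap
          (AmalgAux.easy_half (AmalgAux.amalg_swap hG) (mul_mem (hmemH 0) (hmemH j)) hx)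
  · rintro ⟨hbd, hbd2⟩
    have hb2' : ∀ j, BoundedElement A B (g 0 * g j) := by
      intro j
      by_cases hj : j = 0
      · subst hj; exact AmalgAux.bounded_sq (hbd 0)
      · exact hbd2 j hj
    by_cases hg0C : g 0 ∈ A ∧ g 0 ∈ B
    · refine ⟨1, Or.inl fun h hh => ?_⟩
      have hall : ∀ j, g j ∈ A := by
        intro j
        have hlen : amalgLen A B (g j) = 0 :=
          Nat.le_zero.mp (by
            have := hmax j
            rwa [AmalgAux.amalgLen_central hG hg0C.1 hg0C.2] at this)
        rcases AmalgAux.exists_rep hG (g j) with ⟨w, hw, hp⟩ | hC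
        · have hw0 : w.length = 0 := by
            rw [← AmalgAux.amalgLen_eq hG hw, hp, hlen]
          have : w = [] := List.length_eq_zero_iff.mp hw0
          subst this
          simp only [List.prod_nil] at hp
          rw [← hp]
          exact one_mem A
        · exact hC.1
      have hconj : ∀ y ∈ Set.range g, (1 : G)⁻¹ * y * 1 ∈ A := by
        rintro _ ⟨j, rfl⟩
        simpa using hall j
      rw [hH] at hh
      exact AmalgAux.conj_closure_mem hconj hh
    · obtain ⟨u, c₀, hred, hprod⟩ := AmalgAux.min_decomp hG (hbd 0) hg0C
      have hc₀L : AmalgAux.Ltr A B c₀ :=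
        AmalgAux.ltr_of_red_singleton
          (AmalgAux.red_append_iff.mp (AmalgAux.red_of_red_append_left hred)).2.1
      rcases hc₀L.1 with hcA | hcB'
      · have hcB : c₀ ∉ B := fun hb => hc₀L.2 ⟨hcA, hb⟩
        have hkey := AmalgAux.hard_key hG g hbd hb2' hmax hred hprod hcA hcB
        refine ⟨u.prod, Or.inl fun h hh => ?_⟩
        have hconj : ∀ y ∈ Set.range g, u.prod⁻¹ * y * u.prod ∈ A := by
          rintro _ ⟨j, rfl⟩
          exact hkey j
        rw [hH] at hh
        exact AmalgAux.conj_closure_mem hconj hh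
      · have hcA : c₀ ∉ A := fun ha => hc₀L.2 ⟨ha, hcB'⟩
        have hkey := AmalgAux.hard_key (AmalgAux.amalg_swap hG) g
          (fun j => AmalgAux.boundedElement_swap (hbd j))
          (fun j => AmalgAux.boundedElement_swap (hb2' j))
          (fun j => by
            rw [AmalgAux.amalgLen_swap A B, AmalgAux.amalgLen_swap A B]
            exact hmax j)
          (AmalgAux.red_swap hred) hprod hcB' hcA
        refine ⟨u.prod, Or.inr fun h hh => ?_⟩
        have hconj : ∀ y ∈ Set.range g, u.prod⁻¹ * y * u.prod ∈ B := by
          rintro _ ⟨j, rfl⟩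
          exact hkey j
        rw [hH] at hh
        exact AmalgAux.conj_closure_mem hconj hh
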